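/- arXiv:2106.00452 — 3 statements merged into one kernel-verified Lean document; each statement's English description precedes it below -/
import Mathlib

section
/- Let G be a connected labeled digraph over A and ≡_S its Stallings equivalence (the equivalence induced by trivially-labeled paths). Then ≡_S is group-preserving: for each vertex x, the group of G at x equals the group of G/≡_S at x/≡_S. -/
open List

section Prelude

variable {A V : Type*}

structure LDigraph (V A : Type*) where
  E : Set (V × A × V)

namespace LDigraph

inductive Step (G : LDigraph V A) : V → V → FreeGroup A → Prop
  | fwd {x a y} : (x, a, y) ∈ G.E → Step G x y (FreeGroup.of a)
  | bwd {x a y} : (x, a, y) ∈ G.E → Step G y x (FreeGroup.of a)⁻¹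

inductive PathLabel (G : LDigraph V A) : V → V → FreeGroup A → Prop
  | nil (x) : PathLabel G x x 1
  | cons {x y z g h} : G.Step x y g → PathLabel G y z h → PathLabel G x z (g * h)

inductive PosPath (G : LDigraph V A) : V → V → List A → Prop
  | nil (x) : PosPath G x x []
  | cons {x a y z w} : (x, a, y) ∈ G.E → PosPath G y z w → PosPath G x z (a :: w)

def loopLabels (G : LDigraph V A) (x : V) : Set (FreeGroup A) :=
  {g | G.PathLabel x x g}

def Connected (G : LDigraph V A) : Prop :=
  ∀ x y : V, ∃ g, G.PathLabel x y g

def quot (G : LDigraph V A) (r : Setoid V) : LDigraph (Quotient r) A :=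
  ⟨{e | ∃ x a y, (x, a, y) ∈ G.E ∧ e = (Quotient.mk r x, a, Quotient.mk r y)}⟩

def GroupPreserving (G : LDigraph V A) (r : Setoid V) : Prop :=
  ∀ x : V, G.loopLabels x = (G.quot r).loopLabels (Quotient.mk r x)

end LDigraph

/-- The image of a word in the free group. -/
def wordToFG (w : List A) : FreeGroup A := (w.map FreeGroup.of).prod

def FactorClosed (L : Set (List A)) : Prop := ∀ w ∈ L, ∀ u : List A, u <:+: w → u ∈ L

def Recurrent (L : Set (List A)) : Prop :=
  FactorClosed L ∧ ∀ u ∈ L, ∀ v ∈ L, ∃ w : List A, w ≠ [] ∧ u ++ w ++ v ∈ L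

def UniformlyRecurrent (L : Set (List A)) : Prop :=
  FactorClosed L ∧ ∀ u ∈ L, ∃ N : ℕ, ∀ w ∈ L, N ≤ w.length → u <:+: w

/-- The Rauzy graph `G_{m,k}`: vertices are the words of `L` of length `m`, and every
word `x ∈ L` of length `m+1` gives an edge from `init x` to `tail x` labeled `x(k)`. -/
def rauzy (L : Set (List A)) (m k : ℕ) : LDigraph (List A) A :=
  ⟨{e | ∃ x a, x ∈ L ∧ x.length = m + 1 ∧ x[k]? = some a ∧ e = (x.dropLast, a, x.tail)}⟩

/-- The extension graph `E(w)`, a bipartite graph on two copies of `A`. -/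
def extGraph (L : Set (List A)) (w : List A) : SimpleGraph (A ⊕ A) where
  Adj x y := ∃ a b, a :: (w ++ [b]) ∈ L ∧
    ((x = Sum.inl a ∧ y = Sum.inr b) ∨ (x = Sum.inr b ∧ y = Sum.inl a))
  symm := ⟨by rintro x y ⟨a, b, h, hc⟩; exact ⟨a, b, h, by tauto⟩⟩
  loopless := ⟨by
    rintro x ⟨a, b, h, ⟨h1, h2⟩ | ⟨h1, h2⟩⟩ <;> rw [h1] at h2 <;> exact absurd h2 (by simp)⟩

/-- The set of genuine vertices of the extension graph of `w`. -/
def extVerts (L : Set (List A)) (w : List A) : Set (A ⊕ A) :=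
  Sum.elim (fun a => a :: w ∈ L) (fun b => w ++ [b] ∈ L)

/-- The extension graph of `w` is connected (all genuine vertices are mutually reachable). -/
def ExtConnected (L : Set (List A)) (w : List A) : Prop :=
  ∀ x ∈ extVerts L w, ∀ y ∈ extVerts L w, (extGraph L w).Reachable x y

/-- The extension graph of order `(d,d)` of the word `y`. -/
def extGraphK (L : Set (List A)) (d : ℕ) (y : List A) : SimpleGraph (List A ⊕ List A) where
  Adj p q := ∃ u v : List A, u.length = d ∧ v.length = d ∧ u ++ y ++ v ∈ L ∧
    ((p = Sum.inl u ∧ q = Sum.inr v) ∨ (p = Sum.inr v ∧ q = Sum.inl u))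
  symm := ⟨by rintro p q ⟨u, v, h1, h2, h3, hc⟩; exact ⟨u, v, h1, h2, h3, by tauto⟩⟩
  loopless := ⟨by
    rintro p ⟨u, v, _, _, _, ⟨h1, h2⟩ | ⟨h1, h2⟩⟩ <;> rw [h1] at h2 <;> exact absurd h2 (by simp)⟩

/-- A language is suffix-connected if for every nonempty word `w ∈ L` there exists a depth
`1 ≤ d ≤ |w|+1` such that the natural embedding of the left extensions of `w` in the
extension graph `E_{d,d}(tail^{d-1} w)` lies in a single connected component. -/
def SuffixConnected (L : Set (List A)) : Prop :=
  ∀ w ∈ L, w ≠ [] → ∃ d : ℕ, 1 ≤ d ∧ d ≤ w.length + 1 ∧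
    ∀ a b : A, a :: w ∈ L → b :: w ∈ L →
      (extGraphK L d (w.drop (d - 1))).Reachable
        (Sum.inl (a :: w.take (d - 1))) (Sum.inl (b :: w.take (d - 1)))

open Classical in
/-- The number of occurrences of `u` in `w`. -/
noncomputable def occCount (u w : List A) : ℕ :=
  (List.range (w.length + 1)).countP fun i => decide (u <+: w.drop i)

/-- The return set `R_{u,v}`. -/
noncomputable def ReturnSet (L : Set (List A)) (u v : List A) : Set (List A) :=
  {r | r ∈ L ∧ u ++ r ++ v ∈ L ∧ (u ++ v) <+: (u ++ r ++ v) ∧ (u ++ v) <:+ (u ++ r ++ v) ∧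
    occCount (u ++ v) (u ++ r ++ v) = 2}

end Prelude

private lemma pl_trans {V A : Type*} {G : LDigraph V A} {x y z : V}
    {g h : FreeGroup A} (p : G.PathLabel x y g) (q : G.PathLabel y z h) :
    G.PathLabel x z (g * h) := by
  induction p with
  | nil => simpa using q
  | cons s _ ih => rw [mul_assoc]; exact .cons s (ih q)

private lemma pl_toQuot {V A : Type*} {G : LDigraph V A} {r : Setoid V}
    {x y : V} {g : FreeGroup A} (p : G.PathLabel x y g) :
    (G.quot r).PathLabel (Quotient.mk r x) (Quotient.mk r y) g := by
  induction p with
  | nil => exact .nil _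
  | cons s _ ih =>
    cases s with
    | fwd h => exact .cons (.fwd ⟨_, _, _, h, rfl⟩) ih
    | bwd h => exact .cons (.bwd ⟨_, _, _, h, rfl⟩) ih

private lemma pl_ofQuot {V A : Type*} {G : LDigraph V A} {r : Setoid V}
    (hr : ∀ x y : V, r.r x y ↔ G.PathLabel x y 1)
    {c d : Quotient r} {g : FreeGroup A} (p : (G.quot r).PathLabel c d g) :
    ∀ x y : V, Quotient.mk r x = c → Quotient.mk r y = d → G.PathLabel x y g := by
  induction p with
  | nil =>
    intro x y hx hy
    exact (hr x y).1 (Quotient.exact (hx.trans hy.symm))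
  | @cons c e d g h s _ ih =>
    intro x y hx hy
    cases s with
    | @fwd _ a _ hm =>
      obtain ⟨x', a', y', hE, heq⟩ := hm
      obtain ⟨hc, ha, he⟩ : Quotient.mk r x' = c ∧ a' = a ∧ Quotient.mk r y' = e := by
        refine ⟨?_, ?_, ?_⟩ <;> simp_all [Prod.ext_iff]
      subst ha
      have h1 : G.PathLabel x x' 1 := (hr x x').1 (Quotient.exact (hx.trans hc.symm))
      have h2 : G.PathLabel y' y h := ih y' y he hy
      have := pl_trans h1 (LDigraph.PathLabel.cons (.fwd hE) h2)
      simpa using this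
    | @bwd _ a _ hm =>
      obtain ⟨x', a', y', hE, heq⟩ := hm
      obtain ⟨hc, ha, he⟩ : Quotient.mk r y' = c ∧ a' = a ∧ Quotient.mk r x' = e := by
        refine ⟨?_, ?_, ?_⟩ <;> simp_all [Prod.ext_iff]
      subst ha
      have h1 : G.PathLabel x y' 1 := (hr x y').1 (Quotient.exact (hx.trans hc.symm))
      have h2 : G.PathLabel x' y h := ih x' y he hy
      have := pl_trans h1 (LDigraph.PathLabel.cons (.bwd hE) h2)
      simpa using this

/-- The Stallings equivalence (the equivalence induced by trivially-labeled paths) of a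
connected labeled digraph is group-preserving. -/
theorem stallings_groupPreserving {V A : Type*} (G : LDigraph V A) (hG : G.Connected)
    (r : Setoid V) (hr : ∀ x y : V, r.r x y ↔ G.PathLabel x y 1) :
    G.GroupPreserving r := by
  intro x
  ext g
  constructor
  · exact fun h => pl_toQuot h
  · exact fun h => pl_ofQuot hr h x x rfl rfl
end

section
/- Let G be a connected labeled digraph over A and ≡ any group-preserving equivalence relation on its vertices. Then ≡ is contained in the Stallings equivalence ≡_S; consequently, ≡_S is the greatest group-preserving equivalence relation of G. -/
open List

theorem aux_trans {V A : Type*} (G : LDigraph V A) {x y z g h} (p : G.PathLabel x y g)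
    (q : G.PathLabel y z h) : G.PathLabel x z (g * h) := by
  induction p with
  | nil => rwa [one_mul]
  | cons s _ ih => rw [mul_assoc]; exact .cons s (ih q)

theorem aux_step_symm {V A : Type*} (G : LDigraph V A) {x y g} (s : G.Step x y g) :
    G.Step y x g⁻¹ := by
  cases s with
  | fwd h => exact .bwd h
  | bwd h => rw [inv_inv]; exact .fwd h

theorem aux_symm {V A : Type*} (G : LDigraph V A) {x y g} (p : G.PathLabel x y g) :
    G.PathLabel y x g⁻¹ := by
  induction p with
  | nil => rw [inv_one]; exact .nil _
  | cons s _ ih =>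
      rw [mul_inv_rev]
      have := aux_trans G ih (.cons (aux_step_symm G s) (.nil _))
      rwa [mul_one] at this

theorem aux_quot {V A : Type*} (G : LDigraph V A) (r : Setoid V) {x y g}
    (p : G.PathLabel x y g) :
    (G.quot r).PathLabel (Quotient.mk r x) (Quotient.mk r y) g := by
  induction p with
  | nil => exact .nil _
  | cons s _ ih =>
      cases s with
      | fwd h => exact .cons (.fwd ⟨_, _, _, h, rfl⟩) ih
      | bwd h => exact .cons (.bwd ⟨_, _, _, h, rfl⟩) ih

/-- Any group-preserving equivalence of a connected labeled digraph is contained in the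
Stallings equivalence (the relation of being joined by a trivially-labeled path); hence the
Stallings equivalence is the greatest group-preserving equivalence. -/
theorem groupPreserving_le_stallings {V A : Type*} (G : LDigraph V A) (hG : G.Connected)
    (r : Setoid V) (h : G.GroupPreserving r) :
    ∀ x y : V, r.r x y → G.PathLabel x y 1 := by
  intro x y hxy
  obtain ⟨g, hg⟩ := hG x y
  have hq : (G.quot r).PathLabel (Quotient.mk r x) (Quotient.mk r x) g := by
    have := aux_quot G r hg
    rwa [← Quotient.sound hxy] at this
  have hloop : G.PathLabel x x g := by
    have hm : g ∈ (G.quot r).loopLabels (Quotient.mk r x) := hq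
    rw [← h x] at hm
    exact hm
  have hinv : G.PathLabel x x g⁻¹ := aux_symm G hloop
  have := aux_trans G hinv hg
  rwa [inv_mul_cancel] at this
end

section
/- Let L be a recurrent language on A containing A. Then the group of the Rauzy graph G_{1,1} at any vertex is a free group of rank n − c + 1, where n = Card(A) and c is the number of connected components of the extension graph of the empty word. -/
open List

section AuxProof

namespace LDigraph

variable {A V W : Type*} {G : LDigraph V A}

theorem Step.symm {u v : V} {g : FreeGroup A} (h : G.Step u v g) : G.Step v u g⁻¹ := by
  cases h with
  | fwd h => exact .bwd h
  | bwd h => rw [inv_inv]; exact .fwd h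

theorem PathLabel.congr' {u v : V} {g g' : FreeGroup A} (h : G.PathLabel u v g) (e : g = g') :
    G.PathLabel u v g' := e ▸ h

theorem PathLabel.trans {u v w : V} {g h : FreeGroup A} (p : G.PathLabel u v g)
    (q : G.PathLabel v w h) : G.PathLabel u w (g * h) := by
  induction p with
  | nil x => exact q.congr' (one_mul h).symm
  | cons s _ ih => exact (PathLabel.cons s (ih q)).congr' (mul_assoc _ _ _).symm

theorem Step.pathLabel {u v : V} {g : FreeGroup A} (s : G.Step u v g) : G.PathLabel u v g :=
  (PathLabel.cons s (PathLabel.nil v)).congr' (mul_one g)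

theorem PathLabel.inv {u v : V} {g : FreeGroup A} (p : G.PathLabel u v g) :
    G.PathLabel v u g⁻¹ := by
  induction p with
  | nil x => exact (PathLabel.nil x).congr' inv_one.symm
  | cons s _ ih => exact (ih.trans s.symm.pathLabel).congr' (mul_inv_rev _ _).symm

theorem PathLabel.map {G₂ : LDigraph W A} (f : V → W)
    (hf : ∀ u a v, (u, a, v) ∈ G.E → (f u, a, f v) ∈ G₂.E) {u v : V} {g : FreeGroup A}
    (p : G.PathLabel u v g) : G₂.PathLabel (f u) (f v) g := by
  induction p with
  | nil x => exact .nil _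
  | cons s _ ih =>
    cases s with
    | fwd h => exact PathLabel.cons (.fwd (hf _ _ _ h)) ih
    | bwd h => exact PathLabel.cons (.bwd (hf _ _ _ h)) ih

end LDigraph

/-- The labeled digraph on `R` with one edge `src b → tgt b` labeled `b`, for each `b : A`. -/
def lgraph {A R : Type*} (src tgt : A → R) : LDigraph R A :=
  ⟨{e | ∃ b, e = (src b, b, tgt b)}⟩

theorem lgraph_crossing {A R : Type*} {src tgt : A → R} (S : Finset R) [DecidableEq R]
    {u w : R} {g : FreeGroup A} (p : (lgraph src tgt).PathLabel u w g) (hu : u ∈ S)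
    (hw : w ∉ S) : ∃ b, (src b ∈ S ∧ tgt b ∉ S) ∨ (tgt b ∈ S ∧ src b ∉ S) := by
  induction p with
  | nil x => exact absurd hu hw
  | @cons x y z g h s p ih =>
    by_cases hy : y ∈ S
    · exact ih hy hw
    · cases s with
      | fwd hE =>
        obtain ⟨b, hb⟩ := hE
        simp only [Prod.mk.injEq] at hb
        obtain ⟨hx, -, hyy⟩ := hb
        exact ⟨b, Or.inl ⟨hx ▸ hu, hyy ▸ hy⟩⟩
      | bwd hE =>
        obtain ⟨b, hb⟩ := hE
        simp only [Prod.mk.injEq] at hb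
        obtain ⟨hyy, -, hx⟩ := hb
        exact ⟨b, Or.inr ⟨hx ▸ hu, hyy ▸ hy⟩⟩
theorem exists_spanning_tree {A R : Type*} [Finite R] (src tgt : A → R) (v0 : R)
    (hconn : ∀ r, ∃ g, (lgraph src tgt).PathLabel v0 r g) :
    ∃ (T : Finset A) (t : R → FreeGroup A),
      t v0 = 1 ∧ (∀ r, (lgraph src tgt).PathLabel v0 r (t r)) ∧
      (∀ r, t r ∈ Subgroup.closure (FreeGroup.of '' (T : Set A))) ∧
      (∀ b ∈ T, t (src b) * FreeGroup.of b = t (tgt b)) ∧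
      T.card + 1 = Nat.card R := by
  classical
  cases nonempty_fintype R
  set Γ := lgraph src tgt with hΓ
  let Inv : Finset R → Finset A → (R → FreeGroup A) → Prop := fun S T t =>
    v0 ∈ S ∧ t v0 = 1 ∧
    (∀ r ∈ S, Γ.PathLabel v0 r (t r) ∧ t r ∈ Subgroup.closure (FreeGroup.of '' (T : Set A))) ∧
    (∀ b ∈ T, src b ∈ S ∧ tgt b ∈ S ∧ t (src b) * FreeGroup.of b = t (tgt b)) ∧
    T.card + 1 = S.card
  have key : ∀ (k : ℕ) (S : Finset R) (T : Finset A) (t : R → FreeGroup A), Inv S T t →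
      Fintype.card R ≤ S.card + k → ∃ S' T' t', Inv S' T' t' ∧ ∀ r, r ∈ S' := by
    intro k
    induction k with
    | zero =>
      intro S T t hInv hcard
      refine ⟨S, T, t, hInv, fun r => ?_⟩
      have : S = Finset.univ := Finset.eq_univ_of_card S
        (le_antisymm (Finset.card_le_univ S) (by simpa using hcard))
      simp [this]
    | succ k ih =>
      intro S T t hInv hcard
      obtain ⟨hv0, htv0, hpc, htree, hSc⟩ := hInv
      by_cases hS : ∀ r, r ∈ S
      · exact ⟨S, T, t, ⟨hv0, htv0, hpc, htree, hSc⟩, hS⟩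
      · push_neg at hS
        obtain ⟨r, hr⟩ := hS
        obtain ⟨g, pg⟩ := hconn r
        obtain ⟨b, hb⟩ := lgraph_crossing S pg hv0 hr
        have hbT : b ∉ T := by
          intro hbT
          rcases hb with ⟨-, h2⟩ | ⟨-, h2⟩
          · exact h2 (htree b hbT).2.1
          · exact h2 (htree b hbT).1
        have hedge : (src b, b, tgt b) ∈ Γ.E := ⟨b, rfl⟩
        have hmono : Subgroup.closure (FreeGroup.of '' (T : Set A)) ≤
            Subgroup.closure (FreeGroup.of '' ((insert b T : Finset A) : Set A)) := by
          apply Subgroup.closure_mono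
          apply Set.image_mono
          simp [Finset.coe_insert, Set.subset_insert]
        have hofb : FreeGroup.of b ∈
            Subgroup.closure (FreeGroup.of '' ((insert b T : Finset A) : Set A)) :=
          Subgroup.subset_closure ⟨b, by simp, rfl⟩
        rcases hb with ⟨h1, h2⟩ | ⟨h1, h2⟩
        · -- src b ∈ S, tgt b ∉ S
          have hne : ∀ r' ∈ S, r' ≠ tgt b := fun r' hr' h => h2 (h ▸ hr')
          refine ih (insert (tgt b) S) (insert b T)
            (Function.update t (tgt b) (t (src b) * FreeGroup.of b)) ⟨?_, ?_, ?_, ?_, ?_⟩ ?_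
          · exact Finset.mem_insert_of_mem hv0
          · rw [Function.update_of_ne (hne v0 hv0)]; exact htv0
          · intro r' hr'
            rcases Finset.mem_insert.1 hr' with rfl | hr'
            · rw [Function.update_self]
              exact ⟨((hpc _ h1).1.trans (LDigraph.Step.fwd hedge).pathLabel),
                mul_mem (hmono (hpc _ h1).2) hofb⟩
            · rw [Function.update_of_ne (hne r' hr')]
              exact ⟨(hpc r' hr').1, hmono (hpc r' hr').2⟩
          · intro b' hb'
            rcases Finset.mem_insert.1 hb' with rfl | hb'
            · exact ⟨Finset.mem_insert_of_mem h1, Finset.mem_insert_self _ _, by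
                rw [Function.update_of_ne (hne _ h1), Function.update_self]⟩
            · obtain ⟨hs, ht, he⟩ := htree b' hb'
              exact ⟨Finset.mem_insert_of_mem hs, Finset.mem_insert_of_mem ht, by
                rw [Function.update_of_ne (hne _ hs), Function.update_of_ne (hne _ ht)]
                exact he⟩
          · rw [Finset.card_insert_of_notMem hbT, Finset.card_insert_of_notMem h2]
            omega
          · rw [Finset.card_insert_of_notMem h2]; omega
        · -- tgt b ∈ S, src b ∉ S
          have hne : ∀ r' ∈ S, r' ≠ src b := fun r' hr' h => h2 (h ▸ hr')
          refine ih (insert (src b) S) (insert b T)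
            (Function.update t (src b) (t (tgt b) * (FreeGroup.of b)⁻¹)) ⟨?_, ?_, ?_, ?_, ?_⟩ ?_
          · exact Finset.mem_insert_of_mem hv0
          · rw [Function.update_of_ne (hne v0 hv0)]; exact htv0
          · intro r' hr'
            rcases Finset.mem_insert.1 hr' with rfl | hr'
            · rw [Function.update_self]
              exact ⟨((hpc _ h1).1.trans (LDigraph.Step.bwd hedge).pathLabel),
                mul_mem (hmono (hpc _ h1).2) (inv_mem hofb)⟩
            · rw [Function.update_of_ne (hne r' hr')]
              exact ⟨(hpc r' hr').1, hmono (hpc r' hr').2⟩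
          · intro b' hb'
            rcases Finset.mem_insert.1 hb' with rfl | hb'
            · refine ⟨Finset.mem_insert_self _ _, Finset.mem_insert_of_mem h1, ?_⟩
              rw [Function.update_self, Function.update_of_ne (hne _ h1),
                inv_mul_cancel_right]
            · obtain ⟨hs, ht, he⟩ := htree b' hb'
              exact ⟨Finset.mem_insert_of_mem hs, Finset.mem_insert_of_mem ht, by
                rw [Function.update_of_ne (hne _ hs), Function.update_of_ne (hne _ ht)]
                exact he⟩
          · rw [Finset.card_insert_of_notMem hbT, Finset.card_insert_of_notMem h2]
            omega
          · rw [Finset.card_insert_of_notMem h2]; omega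
  have hInv0 : Inv {v0} ∅ (fun _ => 1) := by
    refine ⟨Finset.mem_singleton_self v0, rfl, ?_, by simp, by simp⟩
    intro r hr
    rw [Finset.mem_singleton] at hr
    subst hr
    exact ⟨.nil _, one_mem _⟩
  obtain ⟨S', T', t', ⟨hv0', htv0', hpc', htree', hSc'⟩, huniv⟩ :=
    key (Fintype.card R) {v0} ∅ (fun _ => 1) hInv0 (by simp)
  refine ⟨T', t', htv0', fun r => (hpc' r (huniv r)).1, fun r => (hpc' r (huniv r)).2,
    fun b hb => (htree' b hb).2.2, ?_⟩
  have hu : S' = Finset.univ := Finset.eq_univ_iff_forall.2 huniv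
  rw [hSc', hu, Finset.card_univ, Nat.card_eq_fintype_card]
theorem lgraph_loopLabels_free {A R : Type*} [Fintype A] [Finite R] (src tgt : A → R) (v0 : R)
    (hconn : ∀ r, ∃ g, (lgraph src tgt).PathLabel v0 r g)
    (hsurj : Function.Surjective tgt) :
    ∃ H : Subgroup (FreeGroup A), (H : Set (FreeGroup A)) = (lgraph src tgt).loopLabels v0 ∧
      Nonempty (H ≃* FreeGroup (Fin (Fintype.card A - Nat.card R + 1))) := by
  classical
  obtain ⟨T, t, htv0, htpath, htcl, htree, hcard⟩ := exists_spanning_tree src tgt v0 hconn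
  set Γ := lgraph src tgt with hΓ
  let B := {b : A // b ∉ T}
  let φ : FreeGroup A →* FreeGroup B :=
    FreeGroup.lift fun b => if h : b ∈ T then 1 else FreeGroup.of (⟨b, h⟩ : B)
  let ι : FreeGroup B →* FreeGroup A :=
    FreeGroup.lift fun x => t (src x.1) * FreeGroup.of x.1 * (t (tgt x.1))⁻¹
  have hφt : ∀ r, φ (t r) = 1 := by
    intro r
    have hle : Subgroup.closure (FreeGroup.of '' (T : Set A)) ≤ φ.ker := by
      rw [Subgroup.closure_le]
      rintro _ ⟨b, hb, rfl⟩
      replace hb : b ∈ T := hb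
      simp only [SetLike.mem_coe, MonoidHom.mem_ker]
      simp [φ, hb]
    exact hle (htcl r)
  have hretr : ∀ y, φ (ι y) = y := by
    have : φ.comp ι = MonoidHom.id _ := by
      apply FreeGroup.ext_hom
      intro x
      simp [ι, φ, hφt, x.2]
    intro y
    calc φ (ι y) = (φ.comp ι) y := rfl
    _ = y := by rw [this]; rfl
  have hinj : Function.Injective ι := fun a b h => by
    have := congrArg φ h; rwa [hretr, hretr] at this
  have hedge : ∀ b : A, (src b, b, tgt b) ∈ Γ.E := fun b => ⟨b, rfl⟩
  have hgen : ∀ b : A, Γ.PathLabel v0 v0 (t (src b) * FreeGroup.of b * (t (tgt b))⁻¹) :=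
    fun b => ((htpath (src b)).trans (LDigraph.Step.fwd (hedge b)).pathLabel).trans
      (htpath (tgt b)).inv
  have hι_loop : ∀ y, ι y ∈ Γ.loopLabels v0 := by
    intro y
    induction y using FreeGroup.induction_on with
    | C1 => rw [map_one]; exact .nil v0
    | of x =>
      have : ι (FreeGroup.of x) = t (src x.1) * FreeGroup.of x.1 * (t (tgt x.1))⁻¹ :=
        FreeGroup.lift_apply_of
      rw [this]
      exact hgen x.1
    | inv_of x ih => rw [map_inv]; exact LDigraph.PathLabel.inv ih
    | mul a b iha ihb => rw [map_mul]; exact LDigraph.PathLabel.trans iha ihb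
  have hloop_sub : ∀ {u v : R} {g : FreeGroup A}, Γ.PathLabel u v g →
      t u * g * (t v)⁻¹ ∈ ι.range := by
    intro u v g p
    induction p with
    | nil x => simpa using one_mem ι.range
    | @cons x y z g h s p ih =>
      cases s with
      | @fwd _ a _ hE =>
        obtain ⟨b, hb⟩ := hE
        simp only [Prod.mk.injEq] at hb
        obtain ⟨hx, hab, hy⟩ := hb
        rw [← hab] at hx hy
        subst hx; subst hy
        have h1 : t (src a) * FreeGroup.of a * (t (tgt a))⁻¹ ∈ ι.range := by
          by_cases hbT : a ∈ T
          · rw [htree a hbT]; simpa using one_mem ι.range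
          · exact ⟨FreeGroup.of ⟨a, hbT⟩, FreeGroup.lift_apply_of⟩
        have heq : t (src a) * (FreeGroup.of a * h) * (t z)⁻¹ =
            (t (src a) * FreeGroup.of a * (t (tgt a))⁻¹) * (t (tgt a) * h * (t z)⁻¹) := by
          group
        rw [heq]
        exact mul_mem h1 ih
      | @bwd _ a _ hE =>
        obtain ⟨b, hb⟩ := hE
        simp only [Prod.mk.injEq] at hb
        obtain ⟨hy, hab, hx⟩ := hb
        rw [← hab] at hx hy
        subst hx; subst hy
        have h1 : t (src a) * FreeGroup.of a * (t (tgt a))⁻¹ ∈ ι.range := by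
          by_cases hbT : a ∈ T
          · rw [htree a hbT]; simpa using one_mem ι.range
          · exact ⟨FreeGroup.of ⟨a, hbT⟩, FreeGroup.lift_apply_of⟩
        have heq : t (tgt a) * ((FreeGroup.of a)⁻¹ * h) * (t z)⁻¹ =
            (t (src a) * FreeGroup.of a * (t (tgt a))⁻¹)⁻¹ * (t (src a) * h * (t z)⁻¹) := by
          group
        rw [heq]
        exact mul_mem (inv_mem h1) ih
  have hset : (ι.range : Set (FreeGroup A)) = Γ.loopLabels v0 := by
    ext g
    constructor
    · rintro ⟨y, rfl⟩
      exact hι_loop y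
    · intro hg
      have := hloop_sub hg
      simpa [htv0] using this
  cases nonempty_fintype R
  have hle : Nat.card R ≤ Fintype.card A := by
    rw [Nat.card_eq_fintype_card]
    exact Fintype.card_le_of_surjective tgt hsurj
  have hB : Fintype.card B = Fintype.card A - Nat.card R + 1 := by
    have h1 : Fintype.card B = Fintype.card A - T.card := by
      rw [Fintype.card_subtype_compl]
      congr 1
      exact Fintype.card_coe T
    omega
  exact ⟨ι.range, hset,
    ⟨(MonoidHom.ofInjective hinj).symm.trans
      (FreeGroup.freeGroupCongr (Fintype.equivFinOfCardEq hB))⟩⟩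
theorem rauzy11_mem_E {A : Type*} {L : Set (List A)} {e : List A × A × List A} :
    e ∈ (rauzy L 1 1).E ↔ ∃ a b, [a, b] ∈ L ∧ e = ([a], b, [b]) := by
  constructor
  · rintro ⟨x, c, hxL, hlen, hget, rfl⟩
    obtain ⟨a, b, rfl⟩ := List.length_eq_two.1 hlen
    simp only [List.getElem?_cons_succ, List.getElem?_cons_zero] at hget
    refine ⟨a, b, hxL, ?_⟩
    simp_all
  · rintro ⟨a, b, h, rfl⟩
    exact ⟨[a, b], b, h, rfl, rfl, rfl⟩

theorem extGraph_adj' {A : Type*} {L : Set (List A)} {s u : A ⊕ A}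
    (h : (extGraph L []).Adj s u) :
    ∃ a b, [a, b] ∈ L ∧ ((s = .inl a ∧ u = .inr b) ∨ (s = .inr b ∧ u = .inl a)) := by
  obtain ⟨a, b, h1, h2⟩ := h
  exact ⟨a, b, by simpa using h1, h2⟩

end AuxProof
/-- The group of the Rauzy graph `G_{1,1}` at any vertex is free of rank `n - c + 1`, where
`n = Card A` and `c` is the number of connected components of the extension graph of the
empty word. -/
theorem rauzyGroup_G11_rank {A : Type*} [Fintype A] (L : Set (List A)) (hrec : Recurrent L)
    (hA : ∀ a : A, [a] ∈ L) (x : List A) (hx : x ∈ L) (hlen : x.length = 1) :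
    ∃ H : Subgroup (FreeGroup A), (H : Set (FreeGroup A)) = (rauzy L 1 1).loopLabels x ∧
      Nonempty (H ≃* FreeGroup (Fin
        (Fintype.card A - Nat.card (extGraph L ([] : List A)).ConnectedComponent + 1))) := by
  classical
  obtain ⟨a0, rfl⟩ := List.length_eq_one_iff.1 hlen
  obtain ⟨hfc, hrc⟩ := hrec
  have hIA : Inhabited A := ⟨a0⟩
  set G := rauzy L 1 1 with hG
  set EG := extGraph L ([] : List A) with hEG
  let lam : A → EG.ConnectedComponent := fun a => EG.connectedComponentMk (Sum.inl a)
  let kap : A → EG.ConnectedComponent := fun b => EG.connectedComponentMk (Sum.inr b)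
  have hadj : ∀ {a b : A}, [a, b] ∈ L → EG.Adj (Sum.inl a) (Sum.inr b) := fun {a b} h =>
    ⟨a, b, h, Or.inl ⟨rfl, rfl⟩⟩
  have hlk : ∀ {a b : A}, [a, b] ∈ L → lam a = kap b := fun h =>
    SimpleGraph.ConnectedComponent.sound (hadj h).reachable
  -- every letter has a left extension
  have hleft : ∀ b : A, ∃ a, [a, b] ∈ L := by
    intro b
    obtain ⟨w, hw, hmem⟩ := hrc [b] (hA b) [b] (hA b)
    refine ⟨w.getLast hw, hfc _ hmem _ ⟨[b] ++ w.dropLast, [], ?_⟩⟩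
    rw [show [w.getLast hw, b] = [w.getLast hw] ++ [b] from rfl]
    simp only [List.append_nil, List.append_assoc]
    rw [← List.append_assoc w.dropLast, List.dropLast_append_getLast hw]
  -- paths in the Rauzy graph along words of L
  have hwordpath : ∀ (u : List A) (a b : A), (a :: (u ++ [b])) ∈ L →
      ∃ g, G.PathLabel [a] [b] g := by
    intro u
    induction u with
    | nil =>
      intro a b h
      exact ⟨_, (LDigraph.Step.fwd (rauzy11_mem_E.2 ⟨a, b, h, rfl⟩)).pathLabel⟩
    | cons d u ih =>
      intro a b h
      have h1 : [a, d] ∈ L := hfc _ h _ ⟨[], u ++ [b], by simp⟩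
      have h2 : (d :: (u ++ [b])) ∈ L := hfc _ h _ ⟨[a], [], by simp⟩
      obtain ⟨g, hg⟩ := ih d b h2
      exact ⟨_, (LDigraph.Step.fwd (rauzy11_mem_E.2 ⟨a, d, h1, rfl⟩)).pathLabel.trans hg⟩
  have hpathab : ∀ a b : A, ∃ g, G.PathLabel [a] [b] g := by
    intro a b
    obtain ⟨w, hw, hmem⟩ := hrc [a] (hA a) [b] (hA b)
    exact hwordpath w a b (by simpa [List.append_assoc] using hmem)
  -- walks in the extension graph give paths in the Rauzy graph
  let rep : A ⊕ A → List A := Sum.elim (fun a => [a]) (fun b => [b])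
  let mu : A ⊕ A → FreeGroup A := Sum.elim (fun _ => 1) (fun b => FreeGroup.of b)
  have hwalk : ∀ {s u : A ⊕ A}, EG.Walk s u →
      G.PathLabel (rep s) (rep u) ((mu s)⁻¹ * mu u) := by
    intro s u w
    induction w with
    | nil => exact (LDigraph.PathLabel.nil _).congr' (by simp)
    | @cons s v u hadj p ih =>
      obtain ⟨a, b, hab, hc⟩ := extGraph_adj' hadj
      rcases hc with ⟨h1, h2⟩ | ⟨h1, h2⟩ <;> subst h1 <;> subst h2
      · have st : G.Step [a] [b] (FreeGroup.of b) :=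
          .fwd (rauzy11_mem_E.2 ⟨a, b, hab, rfl⟩)
        exact (st.pathLabel.trans ih).congr' (by simp [mu])
      · have st : G.Step [b] [a] (FreeGroup.of b)⁻¹ :=
          .bwd (rauzy11_mem_E.2 ⟨a, b, hab, rfl⟩)
        exact (st.pathLabel.trans ih).congr' (by simp [mu, mul_assoc])
  have hreach : ∀ {s u : A ⊕ A}, EG.Reachable s u →
      G.PathLabel (rep s) (rep u) ((mu s)⁻¹ * mu u) := fun h => h.elim fun w => hwalk w
  -- the folded graph
  let Γ := lgraph kap lam
  let f : List A → EG.ConnectedComponent := fun w => lam w.headI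
  have hmap : ∀ u b v, (u, b, v) ∈ G.E → (f u, b, f v) ∈ Γ.E := by
    intro u b v hE
    obtain ⟨a, b', hab, heq⟩ := rauzy11_mem_E.1 hE
    simp only [Prod.mk.injEq] at heq
    obtain ⟨hu, hb, hv⟩ := heq
    rw [hu, hv, hb]
    refine ⟨b', ?_⟩
    rw [show f [a] = lam a from rfl, hlk hab]
    rfl
  -- transfer of loops from the folded graph back to the Rauzy graph
  have hback : ∀ {r r' : EG.ConnectedComponent} {g : FreeGroup A}, Γ.PathLabel r r' g →
      ∀ a : A, lam a = r → ∃ a', lam a' = r' ∧ G.PathLabel [a] [a'] g := by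
    intro r r' g p
    induction p with
    | nil x => intro a ha; exact ⟨a, ha, .nil _⟩
    | @cons x y z gs h s p ih =>
      intro a ha
      cases s with
      | @fwd _ c _ hE =>
        obtain ⟨b, hb⟩ := hE
        simp only [Prod.mk.injEq] at hb
        obtain ⟨hx, hcb, hy⟩ := hb
        rw [← hcb] at hx hy
        have hcomp : EG.connectedComponentMk (Sum.inl a) =
            EG.connectedComponentMk (Sum.inr c) := by
          rw [show EG.connectedComponentMk (Sum.inl a) = lam a from rfl, ha, hx]
        have p1 : G.PathLabel [a] [c] (FreeGroup.of c) :=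
          (hreach (SimpleGraph.ConnectedComponent.exact hcomp)).congr' (by simp [mu])
        obtain ⟨a', ha', p2⟩ := ih c hy.symm
        exact ⟨a', ha', p1.trans p2⟩
      | @bwd _ c _ hE =>
        obtain ⟨b, hb⟩ := hE
        simp only [Prod.mk.injEq] at hb
        obtain ⟨hy, hcb, hx⟩ := hb
        rw [← hcb] at hx hy
        -- x = lam c, y = kap c
        have hcomp : EG.connectedComponentMk (Sum.inl a) =
            EG.connectedComponentMk (Sum.inl c) := by
          rw [show EG.connectedComponentMk (Sum.inl a) = lam a from rfl, ha, hx]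
        have p0 : G.PathLabel [a] [c] 1 :=
          (hreach (SimpleGraph.ConnectedComponent.exact hcomp)).congr' (by simp [mu])
        obtain ⟨a1, ha1⟩ := hleft c
        have st : G.Step [c] [a1] (FreeGroup.of c)⁻¹ :=
          .bwd (rauzy11_mem_E.2 ⟨a1, c, ha1, rfl⟩)
        have hla1 : lam a1 = y := by rw [hlk ha1, hy]
        obtain ⟨a', ha', p2⟩ := ih a1 hla1
        exact ⟨a', ha', (p0.trans (st.pathLabel.trans p2)).congr' (by rw [one_mul])⟩
  -- connectivity and surjectivity
  have hconn : ∀ r : EG.ConnectedComponent, ∃ g, Γ.PathLabel (lam a0) r g := by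
    have hinl : ∀ a : A, ∃ g, Γ.PathLabel (lam a0) (lam a) g := by
      intro a
      obtain ⟨g, p⟩ := hpathab a0 a
      exact ⟨g, LDigraph.PathLabel.map f hmap p⟩
    intro r
    obtain ⟨s, rfl⟩ := Quot.exists_rep r
    cases s with
    | inl a => exact hinl a
    | inr b =>
      obtain ⟨a1, ha1⟩ := hleft b
      obtain ⟨g, p⟩ := hinl a1
      have p' : Γ.PathLabel (lam a0) (kap b) g := hlk ha1 ▸ p
      exact ⟨g, p'⟩
  have hsurj : Function.Surjective lam := by
    intro r
    obtain ⟨s, rfl⟩ := Quot.exists_rep r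
    cases s with
    | inl a => exact ⟨a, rfl⟩
    | inr b =>
      obtain ⟨a1, ha1⟩ := hleft b
      exact ⟨a1, hlk ha1⟩
  obtain ⟨H, hH, hiso⟩ := lgraph_loopLabels_free kap lam (lam a0) hconn hsurj
  refine ⟨H, ?_, hiso⟩
  rw [hH]
  ext g
  constructor
  · intro hg
    obtain ⟨a', ha', p⟩ := hback hg a0 rfl
    have hcomp : EG.connectedComponentMk (Sum.inl a') =
        EG.connectedComponentMk (Sum.inl a0) := ha'
    have p0 : G.PathLabel [a'] [a0] 1 :=
      (hreach (SimpleGraph.ConnectedComponent.exact hcomp)).congr' (by simp [mu])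
    exact (p.trans p0).congr' (mul_one g)
  · intro hg
    exact LDigraph.PathLabel.map f hmap hg
end
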